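/- arXiv:1310.4571 — 11 statements merged into one kernel-verified Lean document; each statement's English description precedes it below -/
import Mathlib

section
/- Let P be a finite set of ports and let γ₁, γ₂ be two sets of interactions over act(P) ∪ fire(P) ∪ inhib(P) such that every interaction in their symmetric difference (γ₁ \ γ₂) ∪ (γ₂ \ γ₁) has empty firing support. Then for every finite family of behaviours B₁,…,Bₙ with pairwise disjoint port sets whose union is P, the composed behaviours coincide: γ₁(B₁,…,Bₙ) = γ₂(B₁,…,Bₙ). -/
/-- Typed ports: activation, firing and negative copies of the port set `P`. -/
inductive TPort (P : Type) : Type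
  | act : P → TPort P
  | fire : P → TPort P
  | inhib : P → TPort P

/-- Firing support of an interaction. -/
def firesup {P : Type} (a : Set (TPort P)) : Set P := {p | TPort.fire p ∈ a}

/-- Activation support of an interaction. -/
def actsup {P : Type} (a : Set (TPort P)) : Set P := {p | TPort.act p ∈ a}

/-- Negative support of an interaction. -/
def negsup {P : Type} (a : Set (TPort P)) : Set P := {p | TPort.inhib p ∈ a}

/-- A behaviour: an LTS with an offer predicate; the transitions labelled by the
empty interaction are exactly the self-loops, and every port occurring on a
transition from a state is offered in that state. -/
structure Behaviour (P : Type) : Type 1 where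
  State : Type
  ports : Set P
  tr : State → Set P → State → Prop
  off : State → P → Prop
  tr_sub : ∀ {q a q'}, tr q a q' → a ⊆ ports
  tr_empty : ∀ q q', tr q ∅ q' ↔ q' = q
  off_of_tr : ∀ {q a q' p}, tr q a q' → p ∈ a → off q p

/-- Transition relation of the composition `γ(B₁,…,Bₙ)` (including the empty
self-loops, present in every behaviour by the standing assumption). -/
def compTr {P ι : Type} (B : ι → Behaviour P) (γ : Set (Set (TPort P)))
    (q : ∀ i, (B i).State) (b : Set P) (q' : ∀ i, (B i).State) : Prop :=
  (b = ∅ ∧ q' = q) ∨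
  ∃ a ∈ γ, b = firesup a ∧ ∀ i,
    (B i).tr (q i) (firesup a ∩ (B i).ports) (q' i) ∧
    (∀ p ∈ actsup a ∩ (B i).ports, (B i).off (q i) p) ∧
    (∀ p ∈ negsup a ∩ (B i).ports, ¬ (B i).off (q i) p)

/-- Offer predicate of the composition `γ(B₁,…,Bₙ)`. -/
def compOff {P ι : Type} (B : ι → Behaviour P)
    (q : ∀ i, (B i).State) (p : P) : Prop :=
  ∃ i, p ∈ (B i).ports ∧ (B i).off (q i) p

/-- Two sets of interactions are equivalent iff they induce the same composed
behaviour on every finite family of behaviours whose port sets partition `P`. -/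
def EquivInter (P : Type) (γ₁ γ₂ : Set (Set (TPort P))) : Prop :=
  ∀ (ι : Type) [Finite ι] (B : ι → Behaviour P),
    Pairwise (fun i j => Disjoint (B i).ports (B j).ports) →
    (⋃ i, (B i).ports) = Set.univ →
    compTr B γ₁ = compTr B γ₂

/-- If every interaction in the symmetric difference of `γ₁`
and `γ₂` has empty firing support, then `γ₁` and `γ₂` induce the same
composition on every finite family of behaviours with pairwise disjoint port
sets whose union is `P`. -/
theorem stmt0 {P : Type} [Finite P] (γ₁ γ₂ : Set (Set (TPort P)))
    (h : ∀ a ∈ (γ₁ \ γ₂) ∪ (γ₂ \ γ₁), firesup a = ∅) :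
    ∀ (ι : Type) [Finite ι] (B : ι → Behaviour P),
      Pairwise (fun i j => Disjoint (B i).ports (B j).ports) →
      (⋃ i, (B i).ports) = Set.univ →
      compTr B γ₁ = compTr B γ₂ := by
  intro ι _ B _ _
  have key : ∀ (γ γ' : Set (Set (TPort P))),
      (∀ a ∈ γ \ γ', firesup a = ∅) →
      ∀ q b q', compTr B γ q b q' → compTr B γ' q b q' := by
    intro γ γ' hγ q b q' hb
    rcases hb with ⟨hb, hq⟩ | ⟨a, ha, hb, hi⟩
    · exact Or.inl ⟨hb, hq⟩
    by_cases ha' : a ∈ γ'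
    · exact Or.inr ⟨a, ha', hb, hi⟩
    · have hfs : firesup a = ∅ := hγ a ⟨ha, ha'⟩
      left
      constructor
      · rw [hb, hfs]
      · funext i
        have := (hi i).1
        rw [hfs, Set.empty_inter] at this
        exact ((B i).tr_empty _ _).1 this
  funext q b q'
  have h1 : ∀ a ∈ γ₁ \ γ₂, firesup a = ∅ := fun a ha => h a (Or.inl ha)
  have h2 : ∀ a ∈ γ₂ \ γ₁, firesup a = ∅ := fun a ha => h a (Or.inr ha)
  exact propext ⟨key γ₁ γ₂ h1 q b q', key γ₂ γ₁ h2 q b q'⟩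
end

section
/- Let γ₁ be a set of interactions over act(P) ∪ fire(P) ∪ inhib(P) and let a be an interaction such that there exists b ∈ γ₁ with b ⊆ a and firesup(b) = firesup(a). Then for every finite family of behaviours B₁,…,Bₙ with pairwise disjoint port sets whose union is P, (γ₁ ∪ {a})(B₁,…,Bₙ) = γ₁(B₁,…,Bₙ). -/
/-- If `b ∈ γ₁`, `b ⊆ a` and `firesup b = firesup a`, then
adding `a` to `γ₁` does not change the composed behaviour, for any finite
family of behaviours with pairwise disjoint port sets whose union is `P`. -/
theorem stmt1 {P : Type} (γ₁ : Set (Set (TPort P))) (a : Set (TPort P))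
    (hex : ∃ b ∈ γ₁, b ⊆ a ∧ firesup b = firesup a) :
    ∀ (ι : Type) [Finite ι] (B : ι → Behaviour P),
      Pairwise (fun i j => Disjoint (B i).ports (B j).ports) →
      (⋃ i, (B i).ports) = Set.univ →
      compTr B (γ₁ ∪ {a}) = compTr B γ₁ := by
  obtain ⟨b, hbγ, hba, hfs⟩ := hex
  intro ι _ B _ _
  funext q c q'
  apply propext
  constructor
  · rintro (h | ⟨x, hx, hc, hall⟩)
    · exact Or.inl h
    rcases hx with hx | hx
    · exact Or.inr ⟨x, hx, hc, hall⟩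
    · refine Or.inr ⟨b, hbγ, ?_, fun i => ?_⟩
      · rw [hfs, ← hx]; exact hc
      obtain ⟨h1, h2, h3⟩ := hall i
      refine ⟨by rw [hfs, ← hx]; exact h1, fun p hp => ?_, fun p hp => ?_⟩
      · exact h2 p ⟨hx ▸ hba hp.1, hp.2⟩
      · exact h3 p ⟨hx ▸ hba hp.1, hp.2⟩
  · rintro (h | ⟨x, hx, hc, hall⟩)
    · exact Or.inl h
    · exact Or.inr ⟨x, Or.inl hx, hc, hall⟩
end

section
/- The equivalence relation ∼ on causal interaction trees over act(P) ∪ fire(P) ∪ inhib(P) is a congruence with respect to the tree constructors: if t₁ ∼ t₂, then for every interaction a and every tree s, a → t₁ ∼ a → t₂, t₁ ⊕ s ∼ t₂ ⊕ s and s ⊕ t₁ ∼ s ⊕ t₂; consequently, for every tree context C(z), C(t₁/z) ∼ C(t₂/z), where C(tᵢ/z) is obtained by replacing all occurrences of the variable z in C by tᵢ. -/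
/-- Causal interaction trees over the typed ports of `P`
(`zero` is the constant 0; the constant 1 is the empty interaction `∅`). -/
inductive CITree (P : Type) : Type
  | zero : CITree P
  | node : Set (TPort P) → CITree P
  | arrow : Set (TPort P) → CITree P → CITree P
  | par : CITree P → CITree P → CITree P

/-- Interaction semantics of causal interaction trees. -/
def sem {P : Type} : CITree P → Set (Set (TPort P))
  | CITree.zero => ∅
  | CITree.node a => {a}
  | CITree.arrow a t => {a} ∪ {c | ∃ b ∈ sem t, c = a ∪ b}
  | CITree.par t₁ t₂ =>
      sem t₁ ∪ sem t₂ ∪ {c | ∃ b₁ ∈ sem t₁, ∃ b₂ ∈ sem t₂, c = b₁ ∪ b₂}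

/-- Equivalence of causal interaction trees. -/
def treeEquiv {P : Type} (t₁ t₂ : CITree P) : Prop :=
  EquivInter P (sem t₁) (sem t₂)

/-- Causal interaction tree contexts (with a hole `z`, possibly occurring
several times or not at all). -/
inductive CICtx (P : Type) : Type
  | hole : CICtx P
  | zero : CICtx P
  | node : Set (TPort P) → CICtx P
  | arrow : Set (TPort P) → CICtx P → CICtx P
  | par : CICtx P → CICtx P → CICtx P

/-- Substitution of a tree for all occurrences of the hole of a context. -/
def substC {P : Type} : CICtx P → CITree P → CITree P
  | CICtx.hole, t => t
  | CICtx.zero, _ => CITree.zero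
  | CICtx.node a, _ => CITree.node a
  | CICtx.arrow a C, t => CITree.arrow a (substC C t)
  | CICtx.par C₁ C₂, t => CITree.par (substC C₁ t) (substC C₂ t)

section Stmt2Aux

open Set

variable {P ι : Type}

lemma firesup_union (a b : Set (TPort P)) :
    firesup (a ∪ b) = firesup a ∪ firesup b := by
  ext p; simp [firesup]

lemma mem_actsup_union {p : P} {a b : Set (TPort P)} :
    p ∈ actsup (a ∪ b) ↔ p ∈ actsup a ∨ p ∈ actsup b := by
  simp [actsup]

lemma mem_negsup_union {p : P} {a b : Set (TPort P)} :
    p ∈ negsup (a ∪ b) ↔ p ∈ negsup a ∨ p ∈ negsup b := by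
  simp [negsup]

/-- The per-component condition that an interaction imposes in a composition. -/
def Cond (B : ι → Behaviour P) (a : Set (TPort P))
    (q q' : ∀ i, (B i).State) : Prop :=
  ∀ i, (B i).tr (q i) (firesup a ∩ (B i).ports) (q' i) ∧
    (∀ p ∈ actsup a ∩ (B i).ports, (B i).off (q i) p) ∧
    (∀ p ∈ negsup a ∩ (B i).ports, ¬ (B i).off (q i) p)

lemma compTr_iff {B : ι → Behaviour P} {γ : Set (Set (TPort P))}
    {q : ∀ i, (B i).State} {b : Set P} {q' : ∀ i, (B i).State} :
    compTr B γ q b q' ↔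
      (b = ∅ ∧ q' = q) ∨ ∃ a ∈ γ, b = firesup a ∧ Cond B a q q' := Iff.rfl

lemma Cond_comm {B : ι → Behaviour P} {a b : Set (TPort P)}
    {q q' : ∀ i, (B i).State} (h : Cond B (a ∪ b) q q') : Cond B (b ∪ a) q q' := by
  rwa [Set.union_comm] at h

lemma Cond_drop {B : ι → Behaviour P} {a b : Set (TPort P)}
    {q q' : ∀ i, (B i).State} (hb : firesup b = ∅)
    (hc : Cond B (a ∪ b) q q') : Cond B a q q' := by
  intro i
  obtain ⟨h1, h2, h3⟩ := hc i
  refine ⟨?_, fun p hp => h2 p ⟨mem_actsup_union.mpr (Or.inl hp.1), hp.2⟩,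
    fun p hp => h3 p ⟨mem_negsup_union.mpr (Or.inl hp.1), hp.2⟩⟩
  rwa [firesup_union, hb, Set.union_empty] at h1

end Stmt2Aux

section Stmt2Aux2

open Set

variable {P ι : Type}

lemma port_unique {B : ι → Behaviour P}
    (hdisj : Pairwise fun i j => Disjoint (B i).ports (B j).ports)
    {i j : ι} {p : P} (hi : p ∈ (B i).ports) (hj : p ∈ (B j).ports) : i = j := by
  by_contra hne
  exact Set.disjoint_left.mp (hdisj hne) hi hj

/-- The composition of the family `B`, with the requirements of the fixed
interaction `a` folded into every (nonempty-labelled) transition, packaged as a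
single behaviour over the full port set. -/
def Mega (B : ι → Behaviour P) (a : Set (TPort P))
    (hcov : (⋃ i, (B i).ports) = Set.univ) : Behaviour P where
  State := ∀ i, (B i).State
  ports := Set.univ
  tr := fun q c q' => (c = ∅ ∧ q' = q) ∨ (c ≠ ∅ ∧ ∀ i,
    (B i).tr (q i) ((firesup a ∪ c) ∩ (B i).ports) (q' i) ∧
    (∀ p ∈ actsup a ∩ (B i).ports, (B i).off (q i) p) ∧
    (∀ p ∈ negsup a ∩ (B i).ports, ¬ (B i).off (q i) p))
  off := fun q p => ∃ i, p ∈ (B i).ports ∧ (B i).off (q i) p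
  tr_sub := fun _ => Set.subset_univ _
  tr_empty := by
    intro q q'
    constructor
    · rintro (⟨_, h⟩ | ⟨h, _⟩)
      · exact h
      · exact absurd rfl h
    · rintro rfl; exact Or.inl ⟨rfl, rfl⟩
  off_of_tr := by
    rintro q c q' p (⟨rfl, _⟩ | ⟨_, h⟩) hp
    · exact absurd hp (Set.notMem_empty p)
    · have hx : p ∈ ⋃ i, (B i).ports := hcov ▸ Set.mem_univ p
      obtain ⟨i, hi⟩ := Set.mem_iUnion.mp hx
      exact ⟨i, hi, (B i).off_of_tr (h i).1 ⟨Set.mem_union_right _ hp, hi⟩⟩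

lemma megaCond {B : ι → Behaviour P}
    (hdisj : Pairwise fun i j => Disjoint (B i).ports (B j).ports)
    (hcov : (⋃ i, (B i).ports) = Set.univ)
    {a b : Set (TPort P)} (hb : firesup b ≠ ∅) {q q' : ∀ i, (B i).State} :
    ((Mega B a hcov).tr q (firesup b) q' ∧
      (∀ p ∈ actsup b, (Mega B a hcov).off q p) ∧
      (∀ p ∈ negsup b, ¬ (Mega B a hcov).off q p)) ↔
    Cond B (a ∪ b) q q' := by
  constructor
  · rintro ⟨(⟨h0, _⟩ | ⟨_, htr⟩), hact, hneg⟩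
    · exact absurd h0 hb
    · intro i
      obtain ⟨h1, h2, h3⟩ := htr i
      refine ⟨by rwa [firesup_union], ?_, ?_⟩
      · intro p hp
        rcases mem_actsup_union.mp hp.1 with hpa | hpb
        · exact h2 p ⟨hpa, hp.2⟩
        · obtain ⟨j, hj, hoff⟩ := hact p hpb
          obtain rfl := port_unique hdisj hj hp.2
          exact hoff
      · intro p hp hoffp
        rcases mem_negsup_union.mp hp.1 with hpa | hpb
        · exact h3 p ⟨hpa, hp.2⟩ hoffp
        · exact hneg p hpb ⟨i, hp.2, hoffp⟩
  · intro hc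
    refine ⟨Or.inr ⟨hb, fun i => ?_⟩, ?_, ?_⟩
    · obtain ⟨h1, h2, h3⟩ := hc i
      exact ⟨by rwa [firesup_union] at h1,
        fun p hp => h2 p ⟨mem_actsup_union.mpr (Or.inl hp.1), hp.2⟩,
        fun p hp => h3 p ⟨mem_negsup_union.mpr (Or.inl hp.1), hp.2⟩⟩
    · intro p hp
      have hx : p ∈ ⋃ i, (B i).ports := hcov ▸ Set.mem_univ p
      obtain ⟨i, hi⟩ := Set.mem_iUnion.mp hx
      exact ⟨i, hi, (hc i).2.1 p ⟨mem_actsup_union.mpr (Or.inr hp), hi⟩⟩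
    · rintro p hp ⟨i, hpi, hoff⟩
      exact (hc i).2.2 p ⟨mem_negsup_union.mpr (Or.inr hp), hpi⟩ hoff

lemma bridge {B : ι → Behaviour P}
    (hdisj : Pairwise fun i j => Disjoint (B i).ports (B j).ports)
    (hcov : (⋃ i, (B i).ports) = Set.univ)
    (a : Set (TPort P)) (T : Set (Set (TPort P))) (c : Set P) (hcne : c ≠ ∅)
    (q q' : ∀ i, (B i).State) :
    compTr (fun _ : Unit => Mega B a hcov) T (fun _ => q) c (fun _ => q') ↔
    ∃ b ∈ T, firesup b ≠ ∅ ∧ c = firesup b ∧ Cond B (a ∪ b) q q' := by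
  constructor
  · rintro (⟨h0, _⟩ | ⟨b, hb, rfl, hcond⟩)
    · exact absurd h0 hcne
    · obtain ⟨h1, h2, h3⟩ := hcond ()
      have h1' : (Mega B a hcov).tr q (firesup b ∩ Set.univ) q' := h1
      rw [Set.inter_univ] at h1'
      refine ⟨b, hb, hcne, rfl, (megaCond hdisj hcov hcne).mp ⟨h1', ?_, ?_⟩⟩
      · exact fun p hp => h2 p ⟨hp, Set.mem_univ p⟩
      · exact fun p hp => h3 p ⟨hp, Set.mem_univ p⟩
  · rintro ⟨b, hb, hbne, rfl, hcond⟩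
    obtain ⟨h1, h2, h3⟩ := (megaCond hdisj hcov hbne).mpr hcond
    refine Or.inr ⟨b, hb, rfl, fun _ => ⟨?_, ?_, ?_⟩⟩
    · show (Mega B a hcov).tr q (firesup b ∩ Set.univ) q'
      rwa [Set.inter_univ]
    · exact fun p hp => h2 p hp.1
    · exact fun p hp => h3 p hp.1

lemma key {T₁ T₂ : Set (Set (TPort P))} (hT : EquivInter P T₁ T₂)
    {B : ι → Behaviour P}
    (hdisj : Pairwise fun i j => Disjoint (B i).ports (B j).ports)
    (hcov : (⋃ i, (B i).ports) = Set.univ)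
    (a : Set (TPort P)) (q q' : ∀ i, (B i).State) (d : Set P) :
    (∃ b ∈ T₁, firesup b ≠ ∅ ∧ d = firesup a ∪ firesup b ∧ Cond B (a ∪ b) q q') ↔
    (∃ b ∈ T₂, firesup b ≠ ∅ ∧ d = firesup a ∪ firesup b ∧ Cond B (a ∪ b) q q') := by
  have E : compTr (fun _ : Unit => Mega B a hcov) T₁ =
      compTr (fun _ : Unit => Mega B a hcov) T₂ :=
    hT Unit (fun _ => Mega B a hcov)
      (fun ⦃i j⦄ hij => absurd (Subsingleton.elim i j) hij)
      (by simp only [Mega]; exact Set.iUnion_const _)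
  have dir : ∀ (S S' : Set (Set (TPort P))),
      compTr (fun _ : Unit => Mega B a hcov) S =
        compTr (fun _ : Unit => Mega B a hcov) S' →
      (∃ b ∈ S, firesup b ≠ ∅ ∧ d = firesup a ∪ firesup b ∧ Cond B (a ∪ b) q q') →
      (∃ b ∈ S', firesup b ≠ ∅ ∧ d = firesup a ∪ firesup b ∧ Cond B (a ∪ b) q q') := by
    rintro S S' hE ⟨b, hb, hbne, hd, hcond⟩
    have hx := (bridge hdisj hcov a S (firesup b) hbne q q').mpr ⟨b, hb, hbne, rfl, hcond⟩
    rw [hE] at hx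
    obtain ⟨b', hb', hbne', hc, hcond'⟩ := (bridge hdisj hcov a S' (firesup b) hbne q q').mp hx
    exact ⟨b', hb', hbne', by rw [hd, hc], hcond'⟩
  exact ⟨dir T₁ T₂ E, dir T₂ T₁ E.symm⟩

end Stmt2Aux2

section Stmt2Main

open Set

variable {P : Type}

lemma treeEquiv_refl (t : CITree P) : treeEquiv t t :=
  fun _ _ _ _ _ => rfl

lemma treeEquiv_symm {t₁ t₂ : CITree P} (h : treeEquiv t₁ t₂) : treeEquiv t₂ t₁ :=
  fun ι _ B hd hc => (h ι B hd hc).symm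

lemma treeEquiv_trans {t₁ t₂ t₃ : CITree P} (h : treeEquiv t₁ t₂)
    (h' : treeEquiv t₂ t₃) : treeEquiv t₁ t₃ :=
  fun ι _ B hd hc => (h ι B hd hc).trans (h' ι B hd hc)

lemma arrow_dir {t₁ t₂ : CITree P} (h : treeEquiv t₁ t₂)
    (a : Set (TPort P)) {ι : Type} (B : ι → Behaviour P)
    (hdisj : Pairwise fun i j => Disjoint (B i).ports (B j).ports)
    (hcov : (⋃ i, (B i).ports) = Set.univ)
    {q : ∀ i, (B i).State} {d : Set P} {q' : ∀ i, (B i).State}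
    (ht : compTr B (sem (CITree.arrow a t₁)) q d q') :
    compTr B (sem (CITree.arrow a t₂)) q d q' := by
  rcases ht with h0 | ⟨e, he, hd, hcond⟩
  · exact Or.inl h0
  · simp only [sem, Set.mem_union, Set.mem_singleton_iff, Set.mem_setOf_eq] at he
    rcases he with rfl | ⟨b, hb, rfl⟩
    · exact Or.inr ⟨e, by simp [sem], hd, hcond⟩
    · by_cases hfb : firesup b = ∅
      · refine Or.inr ⟨a, by simp [sem], ?_, Cond_drop hfb hcond⟩
        rw [hd, firesup_union, hfb, Set.union_empty]
      · obtain ⟨b', hb', hbne', hd', hcond'⟩ :=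
          (key h hdisj hcov a q q' d).mp
            ⟨b, hb, hfb, by rw [hd, firesup_union], hcond⟩
        refine Or.inr ⟨a ∪ b', ?_, by rw [firesup_union]; exact hd', hcond'⟩
        simp only [sem, Set.mem_union, Set.mem_singleton_iff, Set.mem_setOf_eq]
        exact Or.inr ⟨b', hb', rfl⟩

lemma arrowCong {t₁ t₂ : CITree P} (h : treeEquiv t₁ t₂) (a : Set (TPort P)) :
    treeEquiv (CITree.arrow a t₁) (CITree.arrow a t₂) := by
  intro ι inst B hdisj hcov
  funext q d q'
  exact propext ⟨arrow_dir h a B hdisj hcov,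
    arrow_dir (treeEquiv_symm h) a B hdisj hcov⟩

lemma par_dir {t₁ t₂ : CITree P} (h : treeEquiv t₁ t₂)
    (s : CITree P) {ι : Type} [Finite ι] (B : ι → Behaviour P)
    (hdisj : Pairwise fun i j => Disjoint (B i).ports (B j).ports)
    (hcov : (⋃ i, (B i).ports) = Set.univ)
    {q : ∀ i, (B i).State} {d : Set P} {q' : ∀ i, (B i).State}
    (ht : compTr B (sem (CITree.par t₁ s)) q d q') :
    compTr B (sem (CITree.par t₂ s)) q d q' := by
  rcases ht with h0 | ⟨e, he, hd, hcond⟩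
  · exact Or.inl h0
  · simp only [sem, Set.mem_union, Set.mem_setOf_eq] at he
    rcases he with (he | he) | ⟨b₁, hb₁, b₂, hb₂, rfl⟩
    · -- `e ∈ sem t₁`: transfer directly through `h`
      have h1 : compTr B (sem t₁) q d q' := Or.inr ⟨e, he, hd, hcond⟩
      rw [h ι B hdisj hcov] at h1
      rcases h1 with h0 | ⟨e', he', hd', hcond'⟩
      · exact Or.inl h0
      · refine Or.inr ⟨e', ?_, hd', hcond'⟩
        simp only [sem, Set.mem_union, Set.mem_setOf_eq]
        exact Or.inl (Or.inl he')
    · refine Or.inr ⟨e, ?_, hd, hcond⟩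
      simp only [sem, Set.mem_union, Set.mem_setOf_eq]
      exact Or.inl (Or.inr he)
    · by_cases hfb : firesup b₁ = ∅
      · -- subsumed by `b₂ ∈ sem s`
        refine Or.inr ⟨b₂, ?_, ?_, Cond_drop hfb (Cond_comm hcond)⟩
        · simp only [sem, Set.mem_union, Set.mem_setOf_eq]
          exact Or.inl (Or.inr hb₂)
        · rw [hd, firesup_union, hfb, Set.empty_union]
      · obtain ⟨b', hb', hbne', hd', hcond'⟩ :=
          (key h hdisj hcov b₂ q q' d).mp
            ⟨b₁, hb₁, hfb, by rw [hd, firesup_union, Set.union_comm], Cond_comm hcond⟩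
        refine Or.inr ⟨b' ∪ b₂, ?_, ?_, Cond_comm hcond'⟩
        · simp only [sem, Set.mem_union, Set.mem_setOf_eq]
          exact Or.inr ⟨b', hb', b₂, hb₂, rfl⟩
        · rw [firesup_union, Set.union_comm]; exact hd'

lemma parCongL {t₁ t₂ : CITree P} (h : treeEquiv t₁ t₂) (s : CITree P) :
    treeEquiv (CITree.par t₁ s) (CITree.par t₂ s) := by
  intro ι inst B hdisj hcov
  funext q d q'
  exact propext ⟨par_dir h s B hdisj hcov,
    par_dir (treeEquiv_symm h) s B hdisj hcov⟩

lemma sem_par_comm (s t : CITree P) :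
    sem (CITree.par s t) = sem (CITree.par t s) := by
  simp only [sem]
  ext c
  simp only [Set.mem_union, Set.mem_setOf_eq]
  constructor
  · rintro ((h | h) | ⟨b₁, h1, b₂, h2, rfl⟩)
    · exact Or.inl (Or.inr h)
    · exact Or.inl (Or.inl h)
    · exact Or.inr ⟨b₂, h2, b₁, h1, Set.union_comm _ _⟩
  · rintro ((h | h) | ⟨b₁, h1, b₂, h2, rfl⟩)
    · exact Or.inl (Or.inr h)
    · exact Or.inl (Or.inl h)
    · exact Or.inr ⟨b₂, h2, b₁, h1, Set.union_comm _ _⟩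

lemma parCongR {t₁ t₂ : CITree P} (h : treeEquiv t₁ t₂) (s : CITree P) :
    treeEquiv (CITree.par s t₁) (CITree.par s t₂) := by
  intro ι inst B hdisj hcov
  show compTr B (sem (CITree.par s t₁)) = compTr B (sem (CITree.par s t₂))
  rw [sem_par_comm s t₁, sem_par_comm s t₂]
  exact parCongL h s ι B hdisj hcov

end Stmt2Main

/-- The equivalence `∼` of causal interaction trees is a
congruence: it is preserved by the tree constructors and hence by every tree
context. -/
theorem stmt2 {P : Type} (t₁ t₂ : CITree P) (h : treeEquiv t₁ t₂) :
    (∀ a : Set (TPort P), treeEquiv (CITree.arrow a t₁) (CITree.arrow a t₂)) ∧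
    (∀ s : CITree P, treeEquiv (CITree.par t₁ s) (CITree.par t₂ s)) ∧
    (∀ s : CITree P, treeEquiv (CITree.par s t₁) (CITree.par s t₂)) ∧
    (∀ C : CICtx P, treeEquiv (substC C t₁) (substC C t₂)) := by
  refine ⟨fun a => arrowCong h a, fun s => parCongL h s, fun s => parCongR h s, fun C => ?_⟩
  induction C with
  | hole => exact h
  | zero => exact treeEquiv_refl _
  | node a => exact treeEquiv_refl _
  | arrow a C ih => exact arrowCong ih a
  | par C₁ C₂ ih₁ ih₂ =>
      exact treeEquiv_trans (parCongL ih₁ (substC C₂ t₁)) (parCongR ih₂ (substC C₁ t₂))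
end

section
/- Let a be an interaction over act(P) ∪ fire(P) ∪ inhib(P) with fire(p) ∈ a for some port p. Then the singleton interaction sets {a ∪ {act(p)}} and {a} are equivalent: for every finite family of behaviours B₁,…,Bₙ with pairwise disjoint port sets whose union is P, {a ∪ {act(p)}}(B₁,…,Bₙ) = {a}(B₁,…,Bₙ). (Soundness of the axiom fire(p)·act(p) = fire(p).) -/
/-- If `fire p ∈ a` then the singleton interaction sets
`{a ∪ {act p}}` and `{a}` are equivalent: they induce the same composition on
every finite family of behaviours with pairwise disjoint port sets whose union
is `P`. (Soundness of the axiom `fire(p)·act(p) = fire(p)`.) -/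
theorem stmt3 {P : Type} (a : Set (TPort P)) (p : P) (hp : TPort.fire p ∈ a) :
    EquivInter P {a ∪ {TPort.act p}} {a} := by
  intro ι _ B hdisj hcover
  have hfs : firesup (a ∪ {TPort.act p}) = firesup a := by
    ext x; simp [firesup, Set.mem_union]
  have hns : negsup (a ∪ {TPort.act p}) = negsup a := by
    ext x; simp [negsup, Set.mem_union]
  have has : actsup (a ∪ {TPort.act p}) = actsup a ∪ {p} := by
    ext x; simp [actsup, Set.mem_union, TPort.act.injEq, eq_comm]
  funext q b q'
  apply propext
  constructor
  · rintro (⟨h1, h2⟩ | ⟨c, hc, hb, hT⟩)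
    · exact Or.inl ⟨h1, h2⟩
    · rcases hc with rfl
      refine Or.inr ⟨a, rfl, by rw [hb, hfs], fun i => ?_⟩
      obtain ⟨ht, hact, hneg⟩ := hT i
      rw [hfs] at ht
      rw [hns] at hneg
      refine ⟨ht, fun x hx => hact x ?_, hneg⟩
      rw [has]
      exact ⟨Or.inl hx.1, hx.2⟩
  · rintro (⟨h1, h2⟩ | ⟨c, hc, hb, hT⟩)
    · exact Or.inl ⟨h1, h2⟩
    · rcases hc with rfl
      refine Or.inr ⟨c ∪ {TPort.act p}, rfl, by rw [hb, hfs], fun i => ?_⟩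
      obtain ⟨ht, hact, hneg⟩ := hT i
      refine ⟨by rw [hfs]; exact ht, ?_, by rw [hns]; exact hneg⟩
      intro x hx
      rw [has] at hx
      rcases hx with ⟨hx1 | hx1, hx2⟩
      · exact hact x ⟨hx1, hx2⟩
      · rcases hx1 with rfl
        exact (B i).off_of_tr ht ⟨hp, hx2⟩
end

section
/- Let a be an interaction over act(P) ∪ fire(P) ∪ inhib(P) containing, for some port p, either both fire(p) and inhib(p), or both act(p) and inhib(p). Then a generates no transitions: for every set of interactions γ and every finite family of behaviours B₁,…,Bₙ with pairwise disjoint port sets whose union is P, (γ ∪ {a})(B₁,…,Bₙ) = γ(B₁,…,Bₙ); in particular {a} ∼ ∅. (Soundness of the axioms fire(p)·inhib(p) = act(p)·inhib(p) = 0.) -/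
/-- An interaction containing, for some port `p`, either both
`fire p` and `inhib p`, or both `act p` and `inhib p`, generates no
transitions: adding it to any set of interactions does not change the composed
behaviour, and in particular `{a} ∼ ∅`.
(Soundness of the axioms `fire(p)·inhib(p) = act(p)·inhib(p) = 0`.) -/
theorem stmt4 {P : Type} (a : Set (TPort P)) (p : P)
    (hp : (TPort.fire p ∈ a ∧ TPort.inhib p ∈ a) ∨
          (TPort.act p ∈ a ∧ TPort.inhib p ∈ a)) :
    (∀ γ : Set (Set (TPort P)), EquivInter P (γ ∪ {a}) γ) ∧
    EquivInter P {a} ∅ := by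
  have key : ∀ γ : Set (Set (TPort P)), EquivInter P (γ ∪ {a}) γ := by
    intro γ ι _ B _ hcov
    funext q b q'
    apply propext
    constructor
    · rintro (h | ⟨c, hc, hb, hall⟩)
      · exact Or.inl h
      rcases hc with hc | hc
      · exact Or.inr ⟨c, hc, hb, hall⟩
      · -- c = a, derive contradiction
        exfalso
        subst hc
        have hpmem : p ∈ ⋃ i, (B i).ports := hcov ▸ Set.mem_univ p
        obtain ⟨i, hi⟩ := Set.mem_iUnion.mp hpmem
        obtain ⟨htr, hact, hneg⟩ := hall i
        rcases hp with ⟨hf, hn⟩ | ⟨ha, hn⟩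
        · have hoff := (B i).off_of_tr htr ⟨hf, hi⟩
          exact hneg p ⟨hn, hi⟩ hoff
        · exact hneg p ⟨hn, hi⟩ (hact p ⟨ha, hi⟩)
    · rintro (h | ⟨c, hc, hrest⟩)
      · exact Or.inl h
      · exact Or.inr ⟨c, Or.inl hc, hrest⟩
  refine ⟨key, ?_⟩
  have := key ∅
  simpa using this
end

section
/- Let a, b, c be interactions over act(P) ∪ fire(P) ∪ inhib(P) with firesup(a) = ∅, and let t be a causal interaction tree. Then the trees c → (a → (b → t)) and c → ((a ∪ b) → t) are equivalent: c → (a → (b → t)) ∼ c → ((a ∪ b) → t). (Soundness of the node push-down axiom.) -/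
/-- If every interaction of `γ₁` is dominated by one of `γ₂` (same firing
support, smaller activation and negative supports), then every `γ₁`-transition
is a `γ₂`-transition. -/
lemma compTr_dom {P ι : Type} {B : ι → Behaviour P} {γ₁ γ₂ : Set (Set (TPort P))}
    (h : ∀ e ∈ γ₁, ∃ e' ∈ γ₂, firesup e' = firesup e ∧
      actsup e' ⊆ actsup e ∧ negsup e' ⊆ negsup e)
    {q : ∀ i, (B i).State} {s : Set P} {q' : ∀ i, (B i).State} :
    compTr B γ₁ q s q' → compTr B γ₂ q s q' := by
  rintro (h0 | ⟨e, he, rfl, hi⟩)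
  · exact Or.inl h0
  obtain ⟨e', he', hf, hact, hneg⟩ := h e he
  refine Or.inr ⟨e', he', hf.symm, fun i => ?_⟩
  obtain ⟨h1, h2, h3⟩ := hi i
  exact ⟨by rw [hf]; exact h1,
    fun p hp => h2 p ⟨hact hp.1, hp.2⟩,
    fun p hp => h3 p ⟨hneg hp.1, hp.2⟩⟩

/-- If `firesup a = ∅` then the trees `c → (a → (b → t))` and
`c → ((a ∪ b) → t)` are equivalent. (Soundness of the node push-down axiom.) -/
theorem stmt5 {P : Type} (a b c : Set (TPort P)) (ha : firesup a = ∅)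
    (t : CITree P) :
    treeEquiv (CITree.arrow c (CITree.arrow a (CITree.arrow b t)))
      (CITree.arrow c (CITree.arrow (a ∪ b) t)) := by
  intro ι _ B _ _
  funext q s q'
  apply propext
  constructor
  · apply compTr_dom
    intro e he
    simp only [sem, Set.mem_union, Set.mem_singleton_iff, Set.mem_setOf_eq] at he
    rcases he with he | ⟨y, hy, he⟩
    · exact ⟨c, Or.inl rfl, by rw [he], by rw [he], by rw [he]⟩
    rcases hy with hy | ⟨z, hz, hy⟩
    · -- e = c ∪ a
      refine ⟨c, Or.inl rfl, ?_, ?_, ?_⟩ <;> rw [he, hy]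
      · ext p
        have := Set.eq_empty_iff_forall_notMem.mp ha p
        simp only [firesup, Set.mem_setOf_eq, Set.mem_union] at *
        tauto
      · intro p hp; simp only [actsup, Set.mem_setOf_eq, Set.mem_union] at *; tauto
      · intro p hp; simp only [negsup, Set.mem_setOf_eq, Set.mem_union] at *; tauto
    rcases hz with hz | ⟨d, hd, hz⟩
    · -- e = c ∪ (a ∪ b)
      refine ⟨c ∪ (a ∪ b), Or.inr ⟨a ∪ b, Or.inl rfl, rfl⟩, ?_, ?_, ?_⟩ <;>
        rw [he, hy, hz]
    · -- e = c ∪ (a ∪ (b ∪ d))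
      refine ⟨c ∪ ((a ∪ b) ∪ d), Or.inr ⟨(a ∪ b) ∪ d, Or.inr ⟨d, hd, rfl⟩, rfl⟩,
        ?_, ?_, ?_⟩ <;> rw [he, hy, hz, Set.union_assoc a b d]
  · apply compTr_dom
    intro e he
    simp only [sem, Set.mem_union, Set.mem_singleton_iff, Set.mem_setOf_eq] at he
    rcases he with he | ⟨y, hy, he⟩
    · exact ⟨e, Or.inl he, rfl, le_refl _, le_refl _⟩
    rcases hy with hy | ⟨d, hd, hy⟩
    · -- e = c ∪ (a ∪ b)
      refine ⟨e, Or.inr ⟨a ∪ b, Or.inr ⟨b, Or.inl rfl, rfl⟩, ?_⟩, rfl, le_refl _, le_refl _⟩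
      rw [he, hy]
    · -- e = c ∪ ((a ∪ b) ∪ d)
      refine ⟨e, Or.inr ⟨a ∪ (b ∪ d), Or.inr ⟨b ∪ d, Or.inr ⟨d, hd, rfl⟩, rfl⟩, ?_⟩,
        rfl, le_refl _, le_refl _⟩
      rw [he, hy, Set.union_assoc a b d]
end

section
/- For all interactions a, b over act(P) ∪ fire(P) ∪ inhib(P) with firesup(b) = ∅, the trees a → b and a are equivalent: a → b ∼ a. -/
/-- If `firesup b = ∅` then the trees `a → b` and `a` are
equivalent. -/
theorem stmt7 {P : Type} (a b : Set (TPort P)) (hb : firesup b = ∅) :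
    treeEquiv (CITree.arrow a (CITree.node b)) (CITree.node a) := by
  have hfs : firesup (a ∪ b) = firesup a := by
    ext p
    simp only [firesup, Set.mem_setOf_eq, Set.mem_union]
    constructor
    · rintro (h | h)
      · exact h
      · exact absurd h (by have := Set.eq_empty_iff_forall_notMem.mp hb p; exact this)
    · exact Or.inl
  intro ι _ B _ _
  funext q c q'
  apply propext
  constructor
  · rintro (⟨h1, h2⟩ | ⟨x, hx, hc, hall⟩)
    · exact Or.inl ⟨h1, h2⟩
    · simp only [sem, Set.mem_union, Set.mem_singleton_iff, Set.mem_setOf_eq] at hx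
      have hxa : x = a ∨ x = a ∪ b := by
        rcases hx with h | ⟨b', hb', h⟩
        · exact Or.inl h
        · exact Or.inr (by rw [h, hb'])
      refine Or.inr ⟨a, rfl, ?_, ?_⟩
      · rcases hxa with h | h
        · rw [← h]; exact hc
        · rw [hc, h, hfs]
      · intro i
        obtain ⟨h1, h2, h3⟩ := hall i
        rcases hxa with h | h
        · subst h; exact ⟨h1, h2, h3⟩
        · subst h
          rw [hfs] at h1
          refine ⟨h1, ?_, ?_⟩
          · intro p hp
            exact h2 p ⟨Or.inl hp.1, hp.2⟩
          · intro p hp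
            exact h3 p ⟨Or.inl hp.1, hp.2⟩
  · rintro (⟨h1, h2⟩ | ⟨x, hx, hc, hall⟩)
    · exact Or.inl ⟨h1, h2⟩
    · refine Or.inr ⟨x, ?_, hc, hall⟩
      simp only [sem, Set.mem_union, Set.mem_singleton_iff] at hx ⊢
      exact Or.inl hx
end

section
/- Let a, c, b₁,…,bₙ be interactions over act(P) ∪ fire(P) ∪ inhib(P) with firesup(a) = ∅, and let t₁,…,tₙ be causal interaction trees. Then c → (a → ⊕ᵢ₌₁ⁿ (bᵢ → tᵢ)) ∼ c → ⊕ᵢ₌₁ⁿ ((a ∪ bᵢ) → tᵢ). -/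
/-- `n`-ary parallel composition `⊕` of a list of trees. -/
def bigPar {P : Type} : List (CITree P) → CITree P
  | [] => CITree.zero
  | t :: ts => CITree.par t (bigPar ts)

lemma union_distrib_aux {P : Type} (a y z : Set (TPort P)) :
    a ∪ (y ∪ z) = (a ∪ y) ∪ (a ∪ z) := by
  rw [Set.union_union_union_comm, Set.union_self]

lemma sem_arrow_union {P : Type} (a b : Set (TPort P)) (t : CITree P) :
    sem (CITree.arrow (a ∪ b) t) = (a ∪ ·) '' sem (CITree.arrow b t) := by
  ext x
  simp only [sem, Set.mem_union, Set.mem_singleton_iff, Set.mem_setOf_eq, Set.mem_image]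
  constructor
  · rintro (rfl | ⟨y, hy, rfl⟩)
    · exact ⟨b, Or.inl rfl, rfl⟩
    · exact ⟨b ∪ y, Or.inr ⟨y, hy, rfl⟩, (Set.union_assoc _ _ _).symm⟩
  · rintro ⟨z, (rfl | ⟨y, hy, rfl⟩), rfl⟩
    · exact Or.inl rfl
    · exact Or.inr ⟨y, hy, (Set.union_assoc _ _ _).symm⟩

lemma sem_par_image {P : Type} (a : Set (TPort P)) {u₁ u₂ v₁ v₂ : CITree P}
    (hu : sem u₂ = (a ∪ ·) '' sem u₁) (hv : sem v₂ = (a ∪ ·) '' sem v₁) :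
    sem (CITree.par u₂ v₂) = (a ∪ ·) '' sem (CITree.par u₁ v₁) := by
  ext x
  simp only [sem, hu, hv, Set.mem_union, Set.mem_image, Set.mem_setOf_eq]
  constructor
  · rintro ((⟨y, hy, rfl⟩ | ⟨y, hy, rfl⟩) | ⟨b₁, ⟨y, hy, rfl⟩, b₂, ⟨z, hz, rfl⟩, rfl⟩)
    · exact ⟨y, Or.inl (Or.inl hy), rfl⟩
    · exact ⟨y, Or.inl (Or.inr hy), rfl⟩
    · exact ⟨y ∪ z, Or.inr ⟨y, hy, z, hz, rfl⟩, union_distrib_aux a y z⟩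
  · rintro ⟨w, ((hw | hw) | ⟨y, hy, z, hz, rfl⟩), rfl⟩
    · exact Or.inl (Or.inl ⟨w, hw, rfl⟩)
    · exact Or.inl (Or.inr ⟨w, hw, rfl⟩)
    · exact Or.inr ⟨a ∪ y, ⟨y, hy, rfl⟩, a ∪ z, ⟨z, hz, rfl⟩, union_distrib_aux a y z⟩

lemma sem_bigPar_image {P : Type} (a : Set (TPort P)) :
    ∀ (n : ℕ) (b : Fin n → Set (TPort P)) (t : Fin n → CITree P),
    sem (bigPar (List.ofFn fun i => CITree.arrow (a ∪ b i) (t i)))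
      = (a ∪ ·) '' sem (bigPar (List.ofFn fun i => CITree.arrow (b i) (t i)))
  | 0, b, t => by simp [bigPar, sem]
  | (n+1), b, t => by
    rw [List.ofFn_succ, List.ofFn_succ]
    exact sem_par_image a (sem_arrow_union a (b 0) (t 0))
      (sem_bigPar_image a n (fun i => b i.succ) (fun i => t i.succ))

lemma compTr_insert {P ι : Type} (B : ι → Behaviour P) (γ : Set (Set (TPort P)))
    {c a : Set (TPort P)} (hc : c ∈ γ) (ha : firesup a = ∅) :
    compTr B (insert (c ∪ a) γ) = compTr B γ := by
  have hfa : ∀ p, TPort.fire p ∉ a := fun p hp =>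
    Set.eq_empty_iff_forall_notMem.mp ha p hp
  have hf : firesup (c ∪ a) = firesup c := by
    ext p
    simp only [firesup, Set.mem_setOf_eq, Set.mem_union]
    exact ⟨fun h => h.resolve_right (hfa p), Or.inl⟩
  funext q b' q'
  apply propext
  constructor
  · rintro (h | ⟨d, hd, hb, hall⟩)
    · exact Or.inl h
    rcases hd with rfl | hd
    · refine Or.inr ⟨c, hc, hb.trans hf, fun i => ?_⟩
      obtain ⟨h1, h2, h3⟩ := hall i
      refine ⟨hf ▸ h1, fun p hp => h2 p ⟨Or.inl hp.1, hp.2⟩,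
        fun p hp => h3 p ⟨Or.inl hp.1, hp.2⟩⟩
    · exact Or.inr ⟨d, hd, hb, hall⟩
  · rintro (h | ⟨d, hd, hb, hall⟩)
    · exact Or.inl h
    · exact Or.inr ⟨d, Set.mem_insert_of_mem _ hd, hb, hall⟩

lemma sem_eq_insert {P : Type} (n : ℕ) (c a : Set (TPort P))
    (b : Fin n → Set (TPort P)) (t : Fin n → CITree P) :
    sem (CITree.arrow c (CITree.arrow a
        (bigPar (List.ofFn fun i => CITree.arrow (b i) (t i)))))
      = insert (c ∪ a)
        (sem (CITree.arrow c
          (bigPar (List.ofFn fun i => CITree.arrow (a ∪ b i) (t i))))) := by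
  have h := sem_bigPar_image a n b t
  ext x
  simp only [sem, h, Set.mem_union, Set.mem_singleton_iff, Set.mem_setOf_eq,
    Set.mem_insert_iff, Set.mem_image]
  constructor
  · rintro (rfl | ⟨y, (rfl | ⟨X, hX, rfl⟩), rfl⟩)
    · exact Or.inr (Or.inl rfl)
    · exact Or.inl rfl
    · exact Or.inr (Or.inr ⟨a ∪ X, ⟨X, hX, rfl⟩, rfl⟩)
  · rintro (rfl | (rfl | ⟨y, ⟨X, hX, rfl⟩, rfl⟩))
    · exact Or.inr ⟨a, Or.inl rfl, rfl⟩
    · exact Or.inl rfl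
    · exact Or.inr ⟨a ∪ X, Or.inr ⟨X, hX, rfl⟩, rfl⟩

/-- If `firesup a = ∅`, then
`c → (a → ⊕ᵢ (bᵢ → tᵢ)) ∼ c → ⊕ᵢ ((a ∪ bᵢ) → tᵢ)`. -/
theorem stmt9 {P : Type} (n : ℕ) (c a : Set (TPort P)) (ha : firesup a = ∅)
    (b : Fin n → Set (TPort P)) (t : Fin n → CITree P) :
    treeEquiv
      (CITree.arrow c (CITree.arrow a
        (bigPar (List.ofFn fun i => CITree.arrow (b i) (t i)))))
      (CITree.arrow c
        (bigPar (List.ofFn fun i => CITree.arrow (a ∪ b i) (t i)))) := by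
  intro ι _ B _ _
  rw [sem_eq_insert n c a b t]
  exact compTr_insert B _ (Or.inl rfl) ha
end

section
/- For every causal interaction tree t over act(P) ∪ fire(P) ∪ inhib(P), the system of causal rules R̃(t) that retains only the rules whose effect is a firing variable or tt is equivalent to the full system R(t): the set of interactions satisfying R̃(t) and the set of interactions satisfying R(t) are ∼-equivalent, i.e., they induce the same composition on every finite family of behaviours. Consequently, every causal interaction tree can be represented by a system of causal rules of the form fire(p) ⇒ C, where C is a DNF Boolean formula over fire(P) ∪ act(P) ∪ inhib(P) without negated firing variables. -/
/-- `cSat π t v` holds iff the valuation (characteristic function of) `v`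
satisfies the cause `c_π(t)` of the causal rule for the typed port `π`
(leaves `a` are treated as `a → 0`). -/
def cSat {P : Type} (π : TPort P) : CITree P → Set (TPort P) → Prop
  | CITree.zero, _ => False
  | CITree.node b, v => π ∈ b ∧ b \ {π} ⊆ v
  | CITree.arrow b t, v =>
      (π ∈ b ∧ b \ {π} ⊆ v) ∨ (π ∉ b ∧ b ⊆ v ∧ cSat π t v)
  | CITree.par t₁ t₂, v => cSat π t₁ v ∨ cSat π t₂ v

/-- `cSatTT t v` holds iff the valuation `v` satisfies the cause `c_tt(t)` of
the causal rule for `tt`. -/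
def cSatTT {P : Type} : CITree P → Set (TPort P) → Prop
  | CITree.zero, _ => False
  | CITree.node b, v => b ⊆ v
  | CITree.arrow b _, v => b ⊆ v
  | CITree.par t₁ t₂, v => cSatTT t₁ v ∨ cSatTT t₂ v

/-- An interaction satisfies the full system `R(t)` (rules for all typed ports
and `tt`). -/
def satFull {P : Type} (t : CITree P) (a : Set (TPort P)) : Prop :=
  cSatTT t a ∧ ∀ π ∈ a, cSat π t a

/-- An interaction satisfies the reduced system `R̃(t)` (only the rules whose
effect is a firing variable or `tt`). -/
def satFire {P : Type} (t : CITree P) (a : Set (TPort P)) : Prop :=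
  cSatTT t a ∧ ∀ p : P, TPort.fire p ∈ a → cSat (TPort.fire p) t a

/-- If a branch `c` of `t` is contained in the valuation `a`, then `a`
satisfies `c_tt(t)`. -/
lemma semTT {P : Type} : ∀ {t : CITree P} {c a : Set (TPort P)},
    c ∈ sem t → c ⊆ a → cSatTT t a := by
  intro t
  induction t with
  | zero => intro c a hc _; exact hc.elim
  | node b =>
      intro c a hc h
      simp only [sem, Set.mem_singleton_iff] at hc
      subst hc
      exact h
  | arrow b s ih =>
      intro c a hc h
      simp only [sem, Set.mem_union, Set.mem_singleton_iff, Set.mem_setOf_eq] at hc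
      rcases hc with rfl | ⟨b', _, rfl⟩
      · exact h
      · exact fun x hx => h (Set.mem_union_left _ hx)
  | par t₁ t₂ ih₁ ih₂ =>
      intro c a hc h
      simp only [sem, Set.mem_union, Set.mem_setOf_eq] at hc
      rcases hc with (hc | hc) | ⟨c₁, h₁, c₂, h₂, rfl⟩
      · exact Or.inl (ih₁ hc h)
      · exact Or.inr (ih₂ hc h)
      · exact Or.inl (ih₁ h₁ fun x hx => h (Set.mem_union_left _ hx))

/-- If a branch `c` of `t` is contained in `a` and `π ∈ c`, then `a` satisfies
`c_π(t)`. -/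
lemma semSat {P : Type} : ∀ {t : CITree P} {c a : Set (TPort P)} {π : TPort P},
    c ∈ sem t → c ⊆ a → π ∈ c → cSat π t a := by
  intro t
  induction t with
  | zero => intro c a π hc _ _; exact hc.elim
  | node b =>
      intro c a π hc h hπ
      simp only [sem, Set.mem_singleton_iff] at hc
      subst hc
      exact ⟨hπ, fun x hx => h hx.1⟩
  | arrow b s ih =>
      intro c a π hc h hπ
      simp only [sem, Set.mem_union, Set.mem_singleton_iff, Set.mem_setOf_eq] at hc
      rcases hc with rfl | ⟨b', hb', rfl⟩
      · exact Or.inl ⟨hπ, fun x hx => h hx.1⟩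
      · by_cases hb : π ∈ b
        · exact Or.inl ⟨hb, fun x hx => h (Set.mem_union_left _ hx.1)⟩
        · rcases hπ with hπ | hπ
          · exact absurd hπ hb
          · exact Or.inr ⟨hb, fun x hx => h (Set.mem_union_left _ hx),
              ih hb' (fun x hx => h (Set.mem_union_right _ hx)) hπ⟩
  | par t₁ t₂ ih₁ ih₂ =>
      intro c a π hc h hπ
      simp only [sem, Set.mem_union, Set.mem_setOf_eq] at hc
      rcases hc with (hc | hc) | ⟨c₁, h₁, c₂, h₂, rfl⟩
      · exact Or.inl (ih₁ hc h hπ)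
      · exact Or.inr (ih₂ hc h hπ)
      · rcases hπ with hπ | hπ
        · exact Or.inl (ih₁ h₁ (fun x hx => h (Set.mem_union_left _ hx)) hπ)
        · exact Or.inr (ih₂ h₂ (fun x hx => h (Set.mem_union_right _ hx)) hπ)

/-- If `a` satisfies `c_tt(t)` then some branch of `t` is contained in `a`. -/
lemma ttSem {P : Type} : ∀ {t : CITree P} {a : Set (TPort P)},
    cSatTT t a → ∃ c ∈ sem t, c ⊆ a := by
  intro t
  induction t with
  | zero => intro a h; exact h.elim
  | node b => intro a h; exact ⟨b, rfl, h⟩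
  | arrow b s ih =>
      intro a h
      exact ⟨b, Set.mem_union_left _ rfl, h⟩
  | par t₁ t₂ ih₁ ih₂ =>
      intro a h
      rcases h with h | h
      · obtain ⟨c, hc, hsub⟩ := ih₁ h
        exact ⟨c, Set.mem_union_left _ (Set.mem_union_left _ hc), hsub⟩
      · obtain ⟨c, hc, hsub⟩ := ih₂ h
        exact ⟨c, Set.mem_union_left _ (Set.mem_union_right _ hc), hsub⟩

/-- If `π ∈ a` and `a` satisfies `c_π(t)`, then some branch of `t` contained in
`a` contains `π`. -/
lemma satSem {P : Type} : ∀ {t : CITree P} {a : Set (TPort P)} {π : TPort P},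
    π ∈ a → cSat π t a → ∃ c ∈ sem t, c ⊆ a ∧ π ∈ c := by
  classical
  intro t
  induction t with
  | zero => intro a π _ h; exact h.elim
  | node b =>
      intro a π hπa h
      refine ⟨b, rfl, fun x hx => ?_, h.1⟩
      by_cases hx' : x = π
      · exact hx' ▸ hπa
      · exact h.2 ⟨hx, hx'⟩
  | arrow b s ih =>
      intro a π hπa h
      rcases h with ⟨hπb, hsub⟩ | ⟨hπb, hba, hs⟩
      · refine ⟨b, Set.mem_union_left _ rfl, fun x hx => ?_, hπb⟩
        by_cases hx' : x = π
        · exact hx' ▸ hπa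
        · exact hsub ⟨hx, hx'⟩
      · obtain ⟨c', hc', hsub', hπc'⟩ := ih hπa hs
        refine ⟨b ∪ c', Set.mem_union_right _ ⟨c', hc', rfl⟩, ?_, Set.mem_union_right _ hπc'⟩
        exact Set.union_subset hba hsub'
  | par t₁ t₂ ih₁ ih₂ =>
      intro a π hπa h
      rcases h with h | h
      · obtain ⟨c, hc, hsub, hπc⟩ := ih₁ hπa h
        exact ⟨c, Set.mem_union_left _ (Set.mem_union_left _ hc), hsub, hπc⟩
      · obtain ⟨c, hc, hsub, hπc⟩ := ih₂ hπa h
        exact ⟨c, Set.mem_union_left _ (Set.mem_union_right _ hc), hsub, hπc⟩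

/-- Key reduction: any interaction satisfying `R̃(t)` contains an interaction
with the same firing support that satisfies the full system `R(t)`. -/
lemma reduce {P : Type} {t : CITree P} {a : Set (TPort P)} (h : satFire t a) :
    ∃ a', a' ⊆ a ∧ firesup a' = firesup a ∧ satFull t a' := by
  classical
  set a' : Set (TPort P) := ⋃₀ {c | c ∈ sem t ∧ c ⊆ a} with ha'
  have hsub : a' ⊆ a := by
    intro x hx
    obtain ⟨c, ⟨_, hca⟩, hxc⟩ := hx
    exact hca hxc
  have hmem : ∀ c, c ∈ sem t → c ⊆ a → c ⊆ a' :=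
    fun c hc hca x hx => ⟨c, ⟨hc, hca⟩, hx⟩
  refine ⟨a', hsub, ?_, ?_, ?_⟩
  · ext p
    constructor
    · exact fun hp => hsub hp
    · intro hp
      obtain ⟨c, hc, hca, hπc⟩ := satSem hp (h.2 p hp)
      exact hmem c hc hca hπc
  · obtain ⟨c, hc, hca⟩ := ttSem h.1
    exact semTT hc (hmem c hc hca)
  · intro π hπ
    obtain ⟨c, ⟨hc, hca⟩, hπc⟩ := hπ
    exact semSat hc (hmem c hc hca) hπc

/-- For every causal interaction tree `t`, the set of
interactions satisfying the reduced system `R̃(t)` and the set of interactions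
satisfying the full system `R(t)` are `∼`-equivalent: they induce the same
composition on every finite family of behaviours. -/
theorem stmt12 {P : Type} (t : CITree P) :
    EquivInter P {a | satFire t a} {a | satFull t a} := by
  intro ι _ B _ _
  funext q b q'
  apply propext
  constructor
  · intro h
    rcases h with ⟨hb, hq⟩ | ⟨a, ha, hb, hcond⟩
    · exact Or.inl ⟨hb, hq⟩
    · obtain ⟨a', hsub, hfs, hfull⟩ := reduce ha
      refine Or.inr ⟨a', hfull, by rw [hb, hfs], fun i => ?_⟩
      refine ⟨by rw [hfs]; exact (hcond i).1, fun p hp => ?_, fun p hp => ?_⟩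
      · exact (hcond i).2.1 p ⟨hsub hp.1, hp.2⟩
      · exact (hcond i).2.2 p ⟨hsub hp.1, hp.2⟩
  · intro h
    rcases h with ⟨hb, hq⟩ | ⟨a, ha, hb, hcond⟩
    · exact Or.inl ⟨hb, hq⟩
    · exact Or.inr ⟨a, ⟨ha.1, fun p hp => ha.2 _ hp⟩, hb, hcond⟩
end

section
/- Let t be a causal interaction tree over act(P) ∪ fire(P) ∪ inhib(P), let a be an interaction satisfying the rule system R̃(t), and let π ∈ a be a typed port in act(P) ∪ inhib(P) such that the valuation of a violates the rule π ⇒ c_π(t) of R(t). Then the interaction a \ {π} also satisfies R̃(t), and firesup(a \ {π}) = firesup(a). -/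
lemma lemA {P : Type} (π : TPort P) (a : Set (TPort P)) :
    ∀ t : CITree P, ¬ cSat π t a → cSatTT t a → cSatTT t (a \ {π})
  | CITree.zero, _, h => h.elim
  | CITree.node b, hv, hb => by
    have hπb : π ∉ b := fun hπb => hv ⟨hπb, fun x hx => hb hx.1⟩
    exact fun x hx => ⟨hb hx, fun hxπ => hπb (hxπ ▸ hx)⟩
  | CITree.arrow b t, hv, hb => by
    have hπb : π ∉ b := fun hπb =>
      hv (Or.inl ⟨hπb, fun x hx => hb hx.1⟩)
    exact fun x hx => ⟨hb hx, fun hxπ => hπb (hxπ ▸ hx)⟩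
  | CITree.par t₁ t₂, hv, hb => by
    simp only [cSat, not_or] at hv
    exact hb.imp (lemA π a t₁ hv.1) (lemA π a t₂ hv.2)

lemma lemB {P : Type} (π σ : TPort P) (a : Set (TPort P)) (hσ : σ ∈ a) :
    ∀ t : CITree P, ¬ cSat π t a → cSat σ t a → cSat σ t (a \ {π})
  | CITree.zero, _, h => h.elim
  | CITree.node b, hv, ⟨hσb, hb⟩ => by
    have hπb : π ∉ b := by
      intro hπb
      apply hv
      refine ⟨hπb, fun x hx => ?_⟩
      by_cases hxσ : x = σ
      · exact hxσ ▸ hσ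
      · exact hb ⟨hx.1, hxσ⟩
    exact ⟨hσb, fun x hx => ⟨hb hx, fun hxπ => hπb (hxπ ▸ hx.1)⟩⟩
  | CITree.arrow b t, hv, hc => by
    rcases hc with ⟨hσb, hb⟩ | ⟨hσb, hb, hct⟩
    · have hπb : π ∉ b := by
        intro hπb
        apply hv
        left
        refine ⟨hπb, fun x hx => ?_⟩
        by_cases hxσ : x = σ
        · exact hxσ ▸ hσ
        · exact hb ⟨hx.1, hxσ⟩
      exact Or.inl ⟨hσb, fun x hx => ⟨hb hx, fun hxπ => hπb (hxπ ▸ hx.1)⟩⟩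
    · have hπb : π ∉ b := by
        intro hπb
        exact hv (Or.inl ⟨hπb, fun x hx => hb hx.1⟩)
      have hvt : ¬ cSat π t a := fun h => hv (Or.inr ⟨hπb, hb, h⟩)
      exact Or.inr ⟨hσb, fun x hx => ⟨hb hx, fun hxπ => hπb (hxπ ▸ hx)⟩,
        lemB π σ a hσ t hvt hct⟩
  | CITree.par t₁ t₂, hv, hc => by
    simp only [cSat, not_or] at hv
    exact hc.imp (lemB π σ a hσ t₁ hv.1) (lemB π σ a hσ t₂ hv.2)

/-- If `a` satisfies `R̃(t)` and `π ∈ a` is an activation or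
negative typed port whose rule `π ⇒ c_π(t)` of `R(t)` is violated by `a`, then
`a \ {π}` still satisfies `R̃(t)`, and the firing support is unchanged. -/
theorem stmt13 {P : Type} (t : CITree P) (a : Set (TPort P)) (p : P)
    (π : TPort P) (hπ : π = TPort.act p ∨ π = TPort.inhib p) (hmem : π ∈ a)
    (hsat : satFire t a) (hviol : ¬ cSat π t a) :
    satFire t (a \ {π}) ∧ firesup (a \ {π}) = firesup a := by
  have hne : ∀ q : P, TPort.fire q ≠ π := by
    rintro q rfl <;> rcases hπ with h | h <;> cases h
  refine ⟨⟨lemA π a t hviol hsat.1, fun q hq => ?_⟩, ?_⟩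
  · exact lemB π (TPort.fire q) a hq.1 t hviol (hsat.2 q hq.1)
  · ext q
    exact ⟨fun h => h.1, fun h => ⟨h, hne q⟩⟩
end

section
/- Let B = (Q, P, →, ↑) be a behaviour with P finite, and let ≺ be a strict partial order on 2^P. Define the prioritised behaviour B_≺ = (Q, P, →_≺, ↑) by the offer-based priority rule: q →^a_≺ q' iff q →^a q' and for every a' with a ≺ a' there exists p ∈ a' with ¬(q ↑ p). Let γ_≺ be the extended interaction model consisting of all interactions fire(a) ∪ {inhib(f(a')) : a' with a ≺ a'}, where a ranges over the labels of B, fire(a) = {fire(p) : p ∈ a}, and f ranges over all choice functions selecting one port f(a') ∈ a' from each interaction a' of higher priority than a. Then the unary composition γ_≺(B) coincides with B_≺, i.e., they have the same transition relation and offer predicate. -/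
/-- Transition relation of the unary composition `γ(B)`. -/
def comp1 {P : Type} (B : Behaviour P) (γ : Set (Set (TPort P)))
    (q : B.State) (b : Set P) (q' : B.State) : Prop :=
  ∃ a ∈ γ, b = firesup a ∧ B.tr q (firesup a) q' ∧
    (∀ p ∈ actsup a, B.off q p) ∧ (∀ p ∈ negsup a, ¬ B.off q p)

/-- Transition relation of the prioritised behaviour `B_≺`, defined by the
offer-based priority rule. -/
def prioTr {P : Type} (B : Behaviour P) (lt : Set P → Set P → Prop)
    (q : B.State) (a : Set P) (q' : B.State) : Prop :=
  B.tr q a q' ∧ ∀ a', lt a a' → ∃ p ∈ a', ¬ B.off q p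

/-- The extended interaction model `γ_≺`: for every label `a` of `B` and every
choice function `f` selecting a port from each interaction of higher priority
than `a`, the interaction `fire(a) ∪ {inhib (f a') : a ≺ a'}`. -/
def gammaPrec {P : Type} (B : Behaviour P) (lt : Set P → Set P → Prop) :
    Set (Set (TPort P)) :=
  {c | ∃ a : Set P, (∃ q q', B.tr q a q') ∧
    ∃ f : ∀ a' : Set P, lt a a' → P,
      (∀ a' h, f a' h ∈ a') ∧
      c = (TPort.fire '' a) ∪ {π | ∃ a' h, π = TPort.inhib (f a' h)}}

/-- For a behaviour `B` over a finite port set and a strict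
partial order `≺` on interactions, the unary composition `γ_≺(B)` coincides
with the prioritised behaviour `B_≺` (their transition relations are equal;
the offer predicates are both those of `B`). -/
theorem stmt15 {P : Type} [Finite P] (B : Behaviour P)
    (lt : Set P → Set P → Prop)
    (hirr : ∀ a, ¬ lt a a)
    (htrans : ∀ a b c, lt a b → lt b c → lt a c) :
    ∀ q b q', comp1 B (gammaPrec B lt) q b q' ↔ prioTr B lt q b q' := by
  intro q b q'
  constructor
  · rintro ⟨c, ⟨a, ⟨qa, qa', htr⟩, f, hf, rfl⟩, hb, htr', hact, hneg⟩
    have hfs : firesup ((TPort.fire '' a) ∪ {π | ∃ a' h, π = TPort.inhib (f a' h)}) = a := by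
      ext p
      simp only [firesup, Set.mem_union, Set.mem_image, Set.mem_setOf_eq]
      constructor
      · rintro (⟨x, hx, hxe⟩ | ⟨a', h, he⟩)
        · cases hxe; exact hx
        · cases he
      · intro hp; exact Or.inl ⟨p, hp, rfl⟩
    rw [hfs] at hb htr'
    subst hb
    refine ⟨htr', fun a' hlt => ⟨f a' hlt, hf a' hlt, ?_⟩⟩
    apply hneg
    simp only [negsup, Set.mem_union, Set.mem_image, Set.mem_setOf_eq]
    exact Or.inr ⟨a', hlt, rfl⟩
  · rintro ⟨htr, hpr⟩
    classical
    choose g hg1 hg2 using hpr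
    refine ⟨(TPort.fire '' b) ∪ {π | ∃ a' h, π = TPort.inhib (g a' h)},
      ⟨b, ⟨q, q', htr⟩, g, hg1, rfl⟩, ?_, ?_, ?_, ?_⟩
    · ext p
      simp only [firesup, Set.mem_union, Set.mem_image, Set.mem_setOf_eq]
      constructor
      · intro hp; exact Or.inl ⟨p, hp, rfl⟩
      · rintro (⟨x, hx, hxe⟩ | ⟨a', h, he⟩)
        · cases hxe; exact hx
        · cases he
    · have : firesup ((TPort.fire '' b) ∪ {π | ∃ a' h, π = TPort.inhib (g a' h)}) = b := by
        ext p
        simp only [firesup, Set.mem_union, Set.mem_image, Set.mem_setOf_eq]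
        constructor
        · rintro (⟨x, hx, hxe⟩ | ⟨a', h, he⟩)
          · cases hxe; exact hx
          · cases he
        · intro hp; exact Or.inl ⟨p, hp, rfl⟩
      rw [this]; exact htr
    · intro p hp
      simp only [actsup, Set.mem_union, Set.mem_image, Set.mem_setOf_eq] at hp
      rcases hp with ⟨x, _, hxe⟩ | ⟨a', h, he⟩
      · cases hxe
      · cases he
    · intro p hp
      simp only [negsup, Set.mem_union, Set.mem_image, Set.mem_setOf_eq] at hp
      rcases hp with ⟨x, _, hxe⟩ | ⟨a', h, he⟩
      · cases hxe
      · cases he; exact hg2 a' h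
end
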